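/- For every n ≥ 2 there exists a prefix-free regular language L with quotient complexity n and syntactic complexity exactly n^{n−2}. -/

import Mathlib

def leftQuotient {α : Type} (L : Language α) (w : List α) : Language α :=
  {x | w ++ x ∈ L}

/-- The quotient (state) complexity: the number of distinct left quotients of `L`. -/
noncomputable def quotientComplexity {α : Type} (L : Language α) : ℕ :=
  Nat.card (Set.range (leftQuotient L))

/-- The Myhill (syntactic) congruence, restricted to nonempty words. -/
def synRel {α : Type} (L : Language α) (x y : {w : List α // w ≠ []}) : Prop :=
  ∀ u v : List α, u ++ x.1 ++ v ∈ L ↔ u ++ y.1 ++ v ∈ L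

/-- The syntactic complexity: the cardinality of the syntactic semigroup `Σ⁺/≈_L`. -/
noncomputable def syntacticComplexity {α : Type} (L : Language α) : ℕ :=
  Nat.card (Quot (synRel L))

/-- No word of `L` is a proper prefix of another word of `L`. -/
def PrefixFree {α : Type} (L : Language α) : Prop :=
  ∀ x ∈ L, ∀ y ∈ L, x <+: y → x = y

namespace PFWitness

variable (m : ℕ)

/-- Accepting state `n-2`. -/
def a : Fin (m + 2) := ⟨m, by omega⟩
/-- Dead state `n-1`. -/
def d : Fin (m + 2) := ⟨m + 1, by omega⟩

lemma a_ne_d : a m ≠ d m := by simp [a, d]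

/-- The transition semigroup: all transformations sending both `a` and `d` to `d`. -/
def T := {t : Fin (m + 2) → Fin (m + 2) // t (a m) = d m ∧ t (d m) = d m}

instance : Finite (T m) := Subtype.finite

/-- The alphabet is indexed by `T m`. -/
noncomputable def e : Fin (Nat.card (T m)) ≃ T m := (Finite.equivFin (T m)).symm

/-- The action of a word on a state. -/
noncomputable def act : List (Fin (Nat.card (T m))) → Fin (m + 2) → Fin (m + 2)
  | [], q => q
  | c :: w, q => act w ((e m c).1 q)

/-- The witness language. -/
noncomputable def L : Language (Fin (Nat.card (T m))) := {w | act m w 0 = a m}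

lemma mem_L {w : List (Fin (Nat.card (T m)))} : w ∈ L m ↔ act m w 0 = a m := Iff.rfl

lemma act_append (u v : List (Fin (Nat.card (T m)))) (q : Fin (m + 2)) :
    act m (u ++ v) q = act m v (act m u q) := by
  induction u generalizing q with
  | nil => rfl
  | cons c u ih =>
    show act m (u ++ v) _ = _
    rw [ih]
    rfl

lemma act_d (w : List (Fin (Nat.card (T m)))) : act m w (d m) = d m := by
  induction w with
  | nil => rfl
  | cons c w ih => simp only [act, (e m c).2.2, ih]

lemma act_a {w : List (Fin (Nat.card (T m)))} (hw : w ≠ []) : act m w (a m) = d m := by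
  cases w with
  | nil => exact absurd rfl hw
  | cons c w => simp only [act, (e m c).2.1, act_d]

/-- The constant-to-`q`-outside-`{a,d}` transformation. -/
def t1 (q : Fin (m + 2)) : T m :=
  ⟨fun x => if x = a m ∨ x = d m then d m else q, by simp⟩

/-- The transformation sending `p` to `a` and everything else to `d`;
it lies in `T` whenever `p ∉ {a, d}`. -/
def t2 (p : Fin (m + 2)) (hpa : p ≠ a m) (hpd : p ≠ d m) : T m :=
  ⟨fun x => if x = p then a m else d m, by
    constructor
    · simp [Ne.symm hpa]
    · simp [Ne.symm hpd]⟩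

lemma act_single (t : T m) (q : Fin (m + 2)) : act m [(e m).symm t] q = t.1 q := by
  simp [act]

lemma zero_ne_d : (0 : Fin (m + 2)) ≠ d m := by
  simp [d, Fin.ext_iff]

/-- Every state is reachable from `0`. -/
lemma reach (q : Fin (m + 2)) : ∃ w, act m w 0 = q := by
  by_cases h0 : q = 0
  · exact ⟨[], h0.symm⟩
  by_cases hd : q = d m
  · refine ⟨[(e m).symm (t1 m (d m))], ?_⟩
    rw [act_single]
    simp only [t1]
    subst hd
    by_cases h : (0 : Fin (m + 2)) = a m ∨ (0 : Fin (m + 2)) = d m <;> simp [h]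
  · -- q ∉ {0, d}; then m ≥ 1, so 0 ∉ {a, d}
    have hm : (0 : Fin (m + 2)) ≠ a m := by
      have hq := q.2
      have hd' : (q : ℕ) ≠ m + 1 := fun hh => hd (Fin.ext (by simpa [d] using hh))
      have h0' : (q : ℕ) ≠ 0 := fun hh => h0 (Fin.ext (by simpa using hh))
      intro hh
      have : (0 : ℕ) = m := congrArg Fin.val hh
      omega
    refine ⟨[(e m).symm (t1 m q)], ?_⟩
    rw [act_single]
    simp [t1, hm, zero_ne_d]

/-- Separation: distinct states have distinct futures. -/
lemma sep {p p' : Fin (m + 2)} (h : p ≠ p') :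
    ∃ v, ¬ (act m v p = a m ↔ act m v p' = a m) := by
  by_cases hpa : p = a m
  · exact ⟨[], by subst hpa; simp only [act]; tauto⟩
  by_cases hpa' : p' = a m
  · exact ⟨[], by subst hpa'; simp only [act]; tauto⟩
  by_cases hpd : p = d m
  · have hpd' : p' ≠ d m := fun hh => h (hpd.trans hh.symm)
    subst hpd
    refine ⟨[(e m).symm (t2 m p' hpa' hpd')], ?_⟩
    rw [act_single, act_single]
    have h1 : (t2 m p' hpa' hpd').1 (d m) = d m := by simp [t2, h]
    have h2 : (t2 m p' hpa' hpd').1 p' = a m := by simp [t2]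
    rw [h1, h2]
    simp [Ne.symm (a_ne_d m)]
  · refine ⟨[(e m).symm (t2 m p hpa hpd)], ?_⟩
    rw [act_single, act_single]
    have h1 : (t2 m p hpa hpd).1 p = a m := by simp [t2]
    have h2 : (t2 m p hpa hpd).1 p' = d m := by simp [t2, Ne.symm h]
    rw [h1, h2]
    simp [Ne.symm (a_ne_d m)]

/-- The residual language of a state. -/
noncomputable def R (q : Fin (m + 2)) : Language (Fin (Nat.card (T m))) :=
  {x | act m x q = a m}

lemma leftQuotient_eq (w : List (Fin (Nat.card (T m)))) :
    leftQuotient (L m) w = R m (act m w 0) := by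
  ext x
  simp only [leftQuotient, R, Set.mem_setOf_eq, mem_L, act_append]

lemma R_injective : Function.Injective (R m) := by
  intro q q' hR
  by_contra h
  obtain ⟨v, hv⟩ := sep m h
  exact hv (by constructor <;> intro hh <;>
    [exact (hR ▸ (show v ∈ R m q from hh) : v ∈ R m q');
     exact (hR ▸ (show v ∈ R m q' from hh) : v ∈ R m q)])

lemma range_eq : Set.range (leftQuotient (L m)) = Set.range (R m) := by
  ext x
  constructor
  · rintro ⟨w, rfl⟩
    exact ⟨act m w 0, (leftQuotient_eq m w).symm⟩
  · rintro ⟨q, rfl⟩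
    obtain ⟨w, hw⟩ := reach m q
    exact ⟨w, by rw [leftQuotient_eq, hw]⟩

lemma quot_complexity : quotientComplexity (L m) = m + 2 := by
  unfold quotientComplexity
  rw [range_eq, Nat.card_range_of_injective (R_injective m), Nat.card_eq_fintype_card,
    Fintype.card_fin]

/-- If two nonempty words act identically, they are syntactically equivalent. -/
lemma synRel_of_act_eq {x y : {w : List (Fin (Nat.card (T m))) // w ≠ []}}
    (h : act m x.1 = act m y.1) : synRel (L m) x y := by
  intro u v
  simp only [mem_L, act_append, h]

/-- Conversely, syntactically equivalent nonempty words act identically. -/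
lemma act_eq_of_synRel {x y : {w : List (Fin (Nat.card (T m))) // w ≠ []}}
    (h : synRel (L m) x y) : act m x.1 = act m y.1 := by
  funext q
  by_contra hne
  have hqa : q ≠ a m := fun hh => hne (by rw [hh, act_a m x.2, act_a m y.2])
  have hqd : q ≠ d m := fun hh => hne (by rw [hh, act_d, act_d])
  -- q ∉ {a, d} forces m ≥ 1, so 0 ∉ {a, d} and t1 reaches q from 0
  have h0a : (0 : Fin (m + 2)) ≠ a m := by
    have hq := q.2
    have hqa' : (q : ℕ) ≠ m := fun hh => hqa (Fin.ext (by simpa [a] using hh))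
    have hqd' : (q : ℕ) ≠ m + 1 := fun hh => hqd (Fin.ext (by simpa [d] using hh))
    intro hh
    have : (0 : ℕ) = m := congrArg Fin.val hh
    omega
  set u : List (Fin (Nat.card (T m))) := [(e m).symm (t1 m q)] with hu
  have hact_u : act m u 0 = q := by rw [hu, act_single]; simp [t1, h0a, zero_ne_d]
  obtain ⟨v, hv⟩ := sep m hne
  refine hv ?_
  have h1 := h u v
  simp only [mem_L, act_append, hact_u] at h1
  exact h1

noncomputable def toT : Quot (synRel (L m)) → T m :=
  Quot.lift (fun x => ⟨act m x.1, act_a m x.2, act_d m x.1⟩)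
    (fun _ _ h => Subtype.ext (act_eq_of_synRel m h))

noncomputable def ofT : T m → Quot (synRel (L m)) :=
  fun t => Quot.mk _ ⟨[(e m).symm t], by simp⟩

lemma toT_ofT (t : T m) : toT m (ofT m t) = t := by
  apply Subtype.ext
  funext q
  show act m [(e m).symm t] q = t.1 q
  exact act_single m t q

lemma ofT_toT (x : Quot (synRel (L m))) : ofT m (toT m x) = x := by
  induction x using Quot.ind with
  | _ x =>
    apply Quot.sound
    apply synRel_of_act_eq
    funext q
    exact act_single m _ q

/-- The syntactic semigroup is in bijection with `T m`. -/
noncomputable def synEquiv : Quot (synRel (L m)) ≃ T m :=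
  ⟨toT m, ofT m, ofT_toT m, toT_ofT m⟩

/-- Counting `T m`: restriction to the complement of `{a, d}` is a bijection. -/
noncomputable def TEquiv : T m ≃ (Fin m → Fin (m + 2)) where
  toFun t i := t.1 ⟨i.1, by omega⟩
  invFun g := ⟨fun x => if h : x.1 < m then g ⟨x.1, h⟩ else d m, by
    exact ⟨dif_neg (by show ¬ m < m; omega), dif_neg (by show ¬ m + 1 < m; omega)⟩⟩
  left_inv t := by
    apply Subtype.ext
    funext x
    show (if h : (x : ℕ) < m then _ else d m) = t.1 x
    by_cases h : x.1 < m
    · rw [dif_pos h]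
    · rw [dif_neg h]
      have hx := x.2
      rcases Nat.lt_or_ge x.1 (m + 1) with h1 | h1
      · have : x = a m := Fin.ext (by show (x : ℕ) = m; omega)
        rw [this, t.2.1]
      · have : x = d m := Fin.ext (by show (x : ℕ) = m + 1; omega)
        rw [this, t.2.2]
  right_inv g := by
    funext i
    show (if h : (i : ℕ) < m then _ else d m) = g i
    rw [dif_pos i.2]

lemma card_T : Nat.card (T m) = (m + 2) ^ m := by
  rw [Nat.card_congr (TEquiv m), Nat.card_fun, Nat.card_eq_fintype_card,
    Nat.card_eq_fintype_card, Fintype.card_fin, Fintype.card_fin]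

lemma syn_complexity : syntacticComplexity (L m) = (m + 2) ^ m := by
  unfold syntacticComplexity
  rw [Nat.card_congr (synEquiv m), card_T]

lemma prefixFree : PrefixFree (L m) := by
  intro x hx y hy hxy
  obtain ⟨z, rfl⟩ := hxy
  cases z with
  | nil => simp
  | cons c z =>
    exfalso
    rw [mem_L, act_append, hx, act_a m (by simp)] at hy
    exact a_ne_d m hy.symm

end PFWitness

/-- For every `n ≥ 2` there is a prefix-free regular language (over some finite
alphabet) with quotient complexity `n` and syntactic complexity exactly `n ^ (n - 2)`. -/
theorem statement2 (n : ℕ) (hn : 2 ≤ n) :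
    ∃ (k : ℕ) (L : Language (Fin k)),
      PrefixFree L ∧ quotientComplexity L = n ∧ syntacticComplexity L = n ^ (n - 2) := by
  obtain ⟨m, rfl⟩ : ∃ m, n = m + 2 := ⟨n - 2, by omega⟩
  exact ⟨Nat.card (PFWitness.T m), PFWitness.L m, PFWitness.prefixFree m,
    PFWitness.quot_complexity m, by rw [PFWitness.syn_complexity, Nat.add_sub_cancel]⟩
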